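/- For |z| < 1 and integers k₁ ≥ 1, …, k_r ≥ 1, the iterated integral ∫₀^z (dz/z)^{∘(k₁−1)} ∘ (dz/(1−z)) ∘ ⋯ ∘ (dz/z)^{∘(k_r−1)} ∘ (dz/(1−z)) equals the multiple polylogarithm series ∑_{n₁>⋯>n_r>0} z^{n₁}/(n₁^{k₁}⋯n_r^{k_r}). -/

import Mathlib

open scoped BigOperators
open MeasureTheory Set

namespace MPLIterInt

/-- Chen's iterated integral of a word of one-forms on the interval:
`∫₀^t 𝟏 = 1`, `∫₀^t ω₁∘⋯∘ω_s = ∫₀^t ω₁(s')·(∫₀^{s'} ω₂∘⋯∘ω_s) ds'`. -/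
noncomputable def II : List (ℝ → ℂ) → ℝ → ℂ
  | [], _ => 1
  | (f :: fs), t => ∫ s in (0 : ℝ)..t, f s * II fs s

/-- The word of one-forms `ζ₁^{∘(k₁−1)} ∘ ζ₁₁ ∘ ⋯ ∘ ζ₁^{∘(k_r−1)} ∘ ζ₁₁`
pulled back along the straight path `s ↦ s·z` from `0` to `z`:
`ζ₁ = dz/z` pulls back to `ds/s` and `ζ₁₁ = dz/(1−z)` to `z ds/(1−sz)`. -/
noncomputable def mplWord (z : ℂ) {r : ℕ} (ks : Fin r → ℕ) : List (ℝ → ℂ) :=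
  List.flatten (List.ofFn fun t : Fin r =>
    List.replicate (ks t - 1) (fun s : ℝ => 1 / (s : ℂ)) ++
      [fun s : ℝ => z / (1 - (s : ℂ) * z)])

/-- coefficients of the multiple polylogarithm series -/
noncomputable def aa : List ℕ → ℕ → ℝ
  | [], n => if n = 0 then 1 else 0
  | (k :: ks), n => if n = 0 then 0 else (∑ m ∈ Finset.range n, aa ks m) / (n : ℝ) ^ k

/-- word for a list of exponents -/
noncomputable def wordL (z : ℂ) : List ℕ → List (ℝ → ℂ)
  | [] => []
  | (k :: ks) => List.replicate (k - 1) (fun s : ℝ => 1 / (s : ℂ)) ++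
      (fun s : ℝ => z / (1 - (s : ℂ) * z)) :: wordL z ks

lemma mplWord_eq_wordL (z : ℂ) : ∀ (r : ℕ) (ks : Fin r → ℕ),
    mplWord z ks = wordL z (List.ofFn ks)
  | 0, ks => by simp [mplWord, wordL]
  | (r+1), ks => by
    rw [List.ofFn_succ, wordL]
    have := mplWord_eq_wordL z r (ks ∘ Fin.succ)
    simp only [mplWord, List.ofFn_succ, List.flatten_cons] at *
    rw [show (fun t : Fin r => (List.replicate ((ks ∘ Fin.succ) t - 1) fun s : ℝ => 1 / (s:ℂ)) ++ [fun s : ℝ => z / (1 - (s:ℂ) * z)]) = (fun i : Fin r => (List.replicate (ks i.succ - 1) fun s : ℝ => 1 / (s:ℂ)) ++ [fun s : ℝ => z / (1 - (s:ℂ) * z)]) from rfl] at this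
    rw [this, List.append_assoc, List.singleton_append]; rfl

lemma aa_nonneg : ∀ (L : List ℕ) (n : ℕ), 0 ≤ aa L n
  | [], n => by unfold aa; positivity
  | (k :: ks), n => by
    unfold aa
    rcases Nat.eq_zero_or_pos n with h | h
    · simp [h]
    · have : ∀ m ∈ Finset.range n, 0 ≤ aa ks m := fun m _ => aa_nonneg ks m
      have h1 : 0 ≤ ∑ m ∈ Finset.range n, aa ks m := Finset.sum_nonneg this
      have : (0:ℝ) < (n:ℝ)^k := by positivity
      simp only [Nat.pos_iff_ne_zero.mp h, if_neg (Nat.pos_iff_ne_zero.mp h)]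
      positivity

lemma aa_le_one : ∀ (L : List ℕ), (∀ k ∈ L, 1 ≤ k) → ∀ n, aa L n ≤ 1
  | [], _, n => by unfold aa; split <;> norm_num
  | (k :: ks), h, n => by
    unfold aa
    rcases Nat.eq_zero_or_pos n with h0 | h0
    · simp [h0]
    rw [if_neg (Nat.pos_iff_ne_zero.mp h0)]
    have hk : 1 ≤ k := h k (List.mem_cons_self)
    have hb : ∑ m ∈ Finset.range n, aa ks m ≤ n := by
      calc ∑ m ∈ Finset.range n, aa ks m ≤ ∑ _m ∈ Finset.range n, (1:ℝ) :=
            Finset.sum_le_sum fun m _ => aa_le_one ks (fun j hj => h j (List.mem_cons_of_mem _ hj)) m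
        _ = n := by simp
    have hn : (n:ℝ) ≤ (n:ℝ)^k := by
      calc (n:ℝ) = (n:ℝ)^1 := (pow_one _).symm
      _ ≤ (n:ℝ)^k := pow_le_pow_right₀ (by exact_mod_cast h0) hk
    rw [div_le_one (by positivity)]
    exact hb.trans hn

lemma aa_cons_zero (k : ℕ) (L : List ℕ) : aa (k :: L) 0 = 0 := by simp [aa]

lemma aa_succ_exp (k : ℕ) (L : List ℕ) (n : ℕ) :
    (n : ℝ) * aa ((k+1) :: L) n = aa (k :: L) n := by
  rcases Nat.eq_zero_or_pos n with h0 | h0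
  · simp [h0, aa]
  have hne := Nat.pos_iff_ne_zero.mp h0
  simp only [aa, if_neg hne, pow_succ]
  field_simp

lemma aa_one_exp (L : List ℕ) (n : ℕ) :
    (n : ℝ) * aa (1 :: L) n = ∑ m ∈ Finset.range n, aa L m := by
  rcases Nat.eq_zero_or_pos n with h0 | h0
  · simp [h0, aa]
  have hne := Nat.pos_iff_ne_zero.mp h0
  simp only [aa, if_neg hne, pow_one]
  field_simp


/-! ### Combinatorics: decreasing tuples -/

noncomputable def Tset (r N : ℕ) : Finset (Fin r → ℕ) :=
  @Finset.filter _ (fun n => StrictAnti n) (Classical.decPred _)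
    (Fintype.piFinset fun _ => Finset.Ioo 0 N)

lemma mem_Tset {r N : ℕ} {n : Fin r → ℕ} :
    n ∈ Tset r N ↔ (∀ i, 0 < n i ∧ n i < N) ∧ StrictAnti n := by
  simp [Tset, Fintype.mem_piFinset, Finset.mem_Ioo]

lemma strictAnti_cons {r m : ℕ} {g : Fin r → ℕ} (hg : StrictAnti g) (hlt : ∀ j, g j < m) :
    StrictAnti (Fin.cons m g : Fin (r+1) → ℕ) := by
  intro i j hij
  induction j using Fin.cases with
  | zero => exact absurd hij (by simp [Fin.not_lt_zero, Fin.le_zero_iff])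
  | succ j' =>
    induction i using Fin.cases with
    | zero => simpa using hlt j'
    | succ i' =>
      have : i' < j' := by
        rwa [Fin.succ_lt_succ_iff] at hij
      simpa using hg this

lemma strictAnti_tail {r : ℕ} {n : Fin (r+1) → ℕ} (h : StrictAnti n) :
    StrictAnti (Fin.tail n) :=
  fun i j hij => h (Fin.succ_lt_succ_iff.mpr hij)

lemma tail_lt_head {r : ℕ} {n : Fin (r+1) → ℕ} (h : StrictAnti n) (j : Fin r) :
    Fin.tail n j < n 0 :=
  h (Fin.succ_pos j)

/-- Lemma G: partial sums of `aa` coefficients as sums over decreasing tuples. -/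
lemma sum_aa_eq_Tset : ∀ (r : ℕ) (ks : Fin r → ℕ) (N : ℕ), 1 ≤ N →
    ∑ m ∈ Finset.range N, aa (List.ofFn ks) m
      = ∑ n ∈ Tset r N, ∏ t, ((n t : ℝ) ^ ks t)⁻¹
  | 0, ks, N, hN => by
    have h1 : Tset 0 N = {(fun i => i.elim0 : Fin 0 → ℕ)} := by
      apply Finset.ext
      intro x
      simp only [mem_Tset, Finset.mem_singleton]
      constructor
      · intro _; funext i; exact i.elim0
      · intro _; exact ⟨fun i => i.elim0, fun i j _ => i.elim0⟩
    rw [h1]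
    simp only [List.ofFn_zero, Finset.sum_singleton]
    rw [show ∏ t : Fin 0, ((_ : ℝ) ^ ks t)⁻¹ = 1 from Finset.prod_empty]
    unfold aa
    rw [Finset.sum_ite_eq' (Finset.range N) 0 (fun _ => (1:ℝ))]
    simp [Nat.pos_iff_ne_zero.mp hN, Finset.mem_range, hN]
  | (r+1), ks, N, hN => by
    have step1 : ∑ m ∈ Finset.range N, aa (List.ofFn ks) m
        = ∑ m ∈ Finset.Ioo 0 N, aa (List.ofFn ks) m := by
      refine (Finset.sum_subset ?_ ?_).symm
      · intro x hx
        rw [Finset.mem_Ioo] at hx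
        exact Finset.mem_range.mpr hx.2
      · intro x hx hx'
        rw [Finset.mem_range] at hx
        rw [Finset.mem_Ioo] at hx'
        have : x = 0 := by omega
        rw [this, List.ofFn_succ, aa_cons_zero]
    rw [step1]
    have step2 : ∀ m ∈ Finset.Ioo 0 N, aa (List.ofFn ks) m
        = ∑ g ∈ Tset r m, ((m:ℝ) ^ ks 0)⁻¹ * ∏ t, ((g t : ℝ) ^ ks t.succ)⁻¹ := by
      intro m hm
      rw [Finset.mem_Ioo] at hm
      rw [List.ofFn_succ]
      unfold aa
      rw [if_neg (by omega)]
      rw [sum_aa_eq_Tset r (fun i => ks i.succ) m hm.1]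
      rw [div_eq_mul_inv, mul_comm, Finset.mul_sum]
    rw [Finset.sum_congr rfl step2, Finset.sum_sigma']
    refine Finset.sum_bij' (fun p _ => Fin.cons p.1 p.2) (fun n _ => ⟨n 0, Fin.tail n⟩)
      ?_ ?_ ?_ ?_ ?_
    · rintro ⟨m, g⟩ hp
      rw [Finset.mem_sigma] at hp
      obtain ⟨hm, hg⟩ := hp
      rw [Finset.mem_Ioo] at hm
      rw [mem_Tset] at hg ⊢
      constructor
      · intro i
        induction i using Fin.cases with
        | zero => simpa using hm
        | succ j =>
          simp only [Fin.cons_succ]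
          exact ⟨(hg.1 j).1, lt_trans (hg.1 j).2 hm.2⟩
      · exact strictAnti_cons hg.2 (fun j => (hg.1 j).2)
    · intro n hn
      rw [mem_Tset] at hn
      rw [Finset.mem_sigma]
      constructor
      · rw [Finset.mem_Ioo]; exact hn.1 0
      · rw [mem_Tset]
        exact ⟨fun j => ⟨(hn.1 j.succ).1, tail_lt_head hn.2 j⟩, strictAnti_tail hn.2⟩
    · rintro ⟨m, g⟩ _
      simp [Fin.tail_cons]
    · intro n _
      exact Fin.cons_self_tail n
    · rintro ⟨m, g⟩ _
      rw [Fin.prod_univ_succ]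
      simp [Fin.cons_zero, Fin.cons_succ]


lemma fiber_sum (r : ℕ) (ks : Fin (r+1) → ℕ) (N : ℕ) (hN : 1 ≤ N)
    [Fintype {n : Fin (r+1) → ℕ // (StrictAnti n ∧ ∀ t, 0 < n t) ∧ n 0 = N}] :
    ∑ d : {n : Fin (r+1) → ℕ // (StrictAnti n ∧ ∀ t, 0 < n t) ∧ n 0 = N},
      ∏ t, ((d.1 t : ℝ) ^ ks t)⁻¹ = aa (List.ofFn ks) N := by
  rw [List.ofFn_succ]
  unfold aa
  rw [if_neg (by omega), sum_aa_eq_Tset r (fun i => ks i.succ) N hN, div_eq_mul_inv,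
    mul_comm, Finset.mul_sum]
  refine Finset.sum_bij' (fun d _ => Fin.tail d.1)
    (fun g hg => ⟨Fin.cons N g, ?_, ?_⟩) ?_ ?_ ?_ ?_ ?_
  · rw [mem_Tset] at hg
    constructor
    · exact strictAnti_cons hg.2 (fun j => (hg.1 j).2)
    · intro t
      induction t using Fin.cases with
      | zero => simpa using (show 0 < N by omega)
      | succ j => simpa using (hg.1 j).1
  · simp
  · rintro ⟨n, ⟨hanti, hpos⟩, h0⟩ _
    rw [mem_Tset]
    refine ⟨fun j => ⟨hpos j.succ, ?_⟩, strictAnti_tail hanti⟩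
    exact lt_of_lt_of_eq (tail_lt_head hanti j) h0
  · intro g _; exact Finset.mem_univ _
  · rintro ⟨n, ⟨hanti, hpos⟩, h0⟩ _
    apply Subtype.ext
    subst h0
    exact Fin.cons_self_tail n
  · intro g _
    simp only [Fin.tail_cons]
  · rintro ⟨n, ⟨hanti, hpos⟩, h0⟩ _
    subst h0
    rw [Fin.prod_univ_succ]
    rfl

lemma finite_fiber (r N : ℕ) :
    Finite {n : Fin (r+1) → ℕ // (StrictAnti n ∧ ∀ t, 0 < n t) ∧ n 0 = N} := by
  have key : ∀ d : {n : Fin (r+1) → ℕ // (StrictAnti n ∧ ∀ t, 0 < n t) ∧ n 0 = N},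
      ∀ t, d.1 t < N + 1 := by
    intro d t
    have h1 : d.1 t ≤ d.1 0 := d.2.1.1.antitone (Fin.zero_le t)
    have h2 := d.2.2
    omega
  apply Finite.of_injective (fun d => (fun t => (⟨d.1 t, key d t⟩ : Fin (N+1))))
  intro d1 d2 h
  apply Subtype.ext
  funext t
  have := congrFun h t
  simpa [Fin.mk.injEq] using this

set_option maxHeartbeats 1000000 in
lemma tsum_mpl (z : ℂ) (hz : ‖z‖ < 1) (r : ℕ) (ks : Fin (r+1) → ℕ)
    (hks : ∀ t, 1 ≤ ks t) :
    ∑' n : {n : Fin (r+1) → ℕ // StrictAnti n ∧ ∀ t, 0 < n t},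
        z ^ (n.1 0) / ∏ t, ((n.1 t : ℂ)) ^ (ks t)
      = ∑' N : ℕ, (aa (List.ofFn ks) N : ℂ) * z ^ N := by
  classical
  set T := {n : Fin (r+1) → ℕ // StrictAnti n ∧ ∀ t, 0 < n t} with hT
  set D : ℕ → Type := fun N => {n : Fin (r+1) → ℕ // (StrictAnti n ∧ ∀ t, 0 < n t) ∧ n 0 = N}
    with hD
  haveI : ∀ N, Finite (D N) := fun N => finite_fiber r N
  haveI : ∀ N, Fintype (D N) := fun N => Fintype.ofFinite _
  set F : T → ℂ := fun n => z ^ (n.1 0) / ∏ t, ((n.1 t : ℂ)) ^ (ks t) with hF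
  set E : (Σ N, D N) ≃ T :=
    { toFun := fun p => ⟨p.2.1, p.2.2.1⟩
      invFun := fun n => ⟨n.1 0, n.1, n.2, rfl⟩
      left_inv := by rintro ⟨N, n, hP, h0⟩; subst h0; rfl
      right_inv := by rintro ⟨n, hP⟩; rfl } with hE
  have hterm : ∀ (N : ℕ) (d : D N),
      F (E ⟨N, d⟩) = z ^ N * ((∏ t, ((d.1 t : ℝ) ^ ks t)⁻¹ : ℝ) : ℂ) := by
    intro N d
    simp only [hF, hE, Equiv.coe_fn_mk]
    rw [d.2.2]
    rw [div_eq_mul_inv]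
    congr 1
    push_cast
    rw [← Finset.prod_inv_distrib]
  have hnorm : ∀ (N : ℕ) (d : D N),
      ‖F (E ⟨N, d⟩)‖ = ‖z‖ ^ N * (∏ t, ((d.1 t : ℝ) ^ ks t)⁻¹) := by
    intro N d
    rw [hterm N d, norm_mul, norm_pow, Complex.norm_real, Real.norm_eq_abs, abs_of_nonneg]
    positivity
  have hfibR : ∀ N : ℕ, ∑ d : D N, ∏ t, ((d.1 t : ℝ) ^ ks t)⁻¹ = aa (List.ofFn ks) N := by
    intro N
    rcases Nat.eq_zero_or_pos N with h0 | h0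
    · subst h0
      haveI : IsEmpty (D 0) := by
        constructor; rintro ⟨n, ⟨_, hpos⟩, hzero⟩
        exact absurd hzero (Nat.pos_iff_ne_zero.mp (hpos 0))
      rw [List.ofFn_succ, aa_cons_zero]
      exact Finset.sum_of_isEmpty _
    · exact fiber_sum r ks N h0
  have hsummable : Summable fun p : Σ N, D N => F (E p) := by
    apply Summable.of_norm
    rw [summable_sigma_of_nonneg (fun p => norm_nonneg _)]
    constructor
    · intro N; exact Summable.of_finite
    · refine Summable.of_nonneg_of_le (f := fun N => ‖z‖ ^ N)
        (fun N => tsum_nonneg fun d => norm_nonneg _) (fun N => ?_)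
        (summable_geometric_of_lt_one (norm_nonneg z) hz)
      rw [tsum_fintype]
      have h3 : ∑ d : D N, ‖F (E ⟨N, d⟩)‖ = ‖z‖ ^ N * aa (List.ofFn ks) N := by
        rw [← hfibR N, Finset.mul_sum]
        exact Finset.sum_congr rfl fun d _ => hnorm N d
      rw [h3]
      calc ‖z‖ ^ N * aa (List.ofFn ks) N ≤ ‖z‖ ^ N * 1 := by
            refine mul_le_mul_of_nonneg_left ?_ (by positivity)
            exact aa_le_one (List.ofFn ks)
              (fun k hk => by obtain ⟨i, rfl⟩ := (List.mem_ofFn (f := ks) (a := k)).mp hk; exact hks i) N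
        _ = ‖z‖ ^ N := mul_one _
  calc ∑' n : T, F n = ∑' p : Σ N, D N, F (E p) := (E.tsum_eq F).symm
    _ = ∑' N : ℕ, ∑' d : D N, F (E ⟨N, d⟩) := Summable.tsum_sigma' (fun N => Summable.of_finite) hsummable
    _ = ∑' N : ℕ, (aa (List.ofFn ks) N : ℂ) * z ^ N := by
        apply tsum_congr
        intro N
        rw [tsum_fintype]
        have h4 : ∑ d : D N, F (E ⟨N, d⟩)
            = z ^ N * ((∑ d : D N, ∏ t, ((d.1 t : ℝ) ^ ks t)⁻¹ : ℝ) : ℂ) := by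
          push_cast
          rw [Finset.mul_sum]
          exact Finset.sum_congr rfl fun d _ => by rw [hterm N d]; push_cast; ring
        rw [h4, hfibR N, mul_comm]


/-! ### Analysis: power series -/

/-- the generating function `∑ aa L n (xz)^n` -/
noncomputable def gg (z : ℂ) (L : List ℕ) (x : ℝ) : ℂ :=
  ∑' n, (aa L n : ℂ) * ((x : ℂ) * z) ^ n

lemma one_sub_ne {w : ℂ} (hw : ‖w‖ < 1) : 1 - w ≠ 0 := by
  intro h
  rw [sub_eq_zero] at h
  rw [← h] at hw
  simp at hw

lemma norm_term (L : List ℕ) (n : ℕ) (w : ℂ) :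
    ‖(aa L n : ℂ) * w ^ n‖ = aa L n * ‖w‖ ^ n := by
  rw [norm_mul, norm_pow, Complex.norm_real, Real.norm_eq_abs, abs_of_nonneg (aa_nonneg L n)]

lemma summable_aa_geom (L : List ℕ) (hL : ∀ k ∈ L, 1 ≤ k) {x : ℝ} (h0 : 0 ≤ x) (hx : x < 1) :
    Summable fun n => aa L n * x ^ n := by
  refine Summable.of_nonneg_of_le (fun n => mul_nonneg (aa_nonneg L n) (pow_nonneg h0 n))
    (fun n => ?_) (summable_geometric_of_lt_one h0 hx)
  calc aa L n * x ^ n ≤ 1 * x ^ n :=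
        mul_le_mul_of_nonneg_right (aa_le_one L hL n) (by positivity)
    _ = x ^ n := one_mul _

lemma summable_norm_term (L : List ℕ) (hL : ∀ k ∈ L, 1 ≤ k) {w : ℂ} (hw : ‖w‖ < 1) :
    Summable fun n => ‖(aa L n : ℂ) * w ^ n‖ := by
  simp only [norm_term]
  exact summable_aa_geom L hL (norm_nonneg w) hw

lemma summable_term (L : List ℕ) (hL : ∀ k ∈ L, 1 ≤ k) {w : ℂ} (hw : ‖w‖ < 1) :
    Summable fun n => (aa L n : ℂ) * w ^ n :=
  (summable_norm_term L hL hw).of_norm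

lemma hasDerivAt_term (c : ℝ) (z : ℂ) (n : ℕ) (x : ℝ) :
    HasDerivAt (fun y : ℝ => (c : ℂ) * ((y : ℂ) * z) ^ n)
      ((c : ℂ) * n * z ^ n * (x : ℂ) ^ (n - 1)) x := by
  have h1 : (fun y : ℝ => (c : ℂ) * ((y : ℂ) * z) ^ n)
      = fun y : ℝ => ((c : ℂ) * z ^ n) * ((y : ℂ)) ^ n := by
    funext y; ring
  rw [h1]
  have h2 : HasDerivAt (fun y : ℝ => ((y : ℂ)) ^ n) ((n : ℂ) * (x : ℂ) ^ (n - 1)) x :=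
    (hasDerivAt_pow n ((x : ℝ) : ℂ)).comp_ofReal
  have h3 := h2.const_mul ((c : ℂ) * z ^ n)
  convert h3 using 1
  all_goals first | rfl | ring

lemma cz_lt_one {z : ℂ} (hz : ‖z‖ < 1) :
    1 < 2 / (1 + ‖z‖) ∧ (2 / (1 + ‖z‖)) * ‖z‖ < 1 := by
  have h0 : (0:ℝ) ≤ ‖z‖ := norm_nonneg z
  constructor
  · rw [lt_div_iff₀ (by linarith)]; linarith
  · rw [div_mul_eq_mul_div, div_lt_one (by linarith)]; linarith

lemma summable_deriv_bound {z : ℂ} (hz : ‖z‖ < 1) :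
    Summable fun n : ℕ => (n : ℝ) * ‖z‖ ^ n * (2 / (1 + ‖z‖)) ^ (n - 1) := by
  obtain ⟨hc1, hcz⟩ := cz_lt_one hz
  set c := 2 / (1 + ‖z‖) with hc
  have hc0 : 0 < c := lt_trans one_pos hc1
  have hsum : Summable fun n : ℕ => (1 / c) * ((n : ℝ) * (c * ‖z‖) ^ n) := by
    apply Summable.mul_left
    have := summable_pow_mul_geometric_of_norm_lt_one 1
      (r := c * ‖z‖) (by rw [Real.norm_eq_abs, abs_of_nonneg (by positivity)]; exact hcz)
    simpa using this
  refine Summable.of_nonneg_of_le (fun n => by positivity) (fun n => ?_) hsum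
  match n with
  | 0 => simp
  | (m+1) =>
    have : (c * ‖z‖) ^ (m + 1) = c ^ (m + 1) * ‖z‖ ^ (m + 1) := mul_pow _ _ _
    rw [this]
    have hsimp : (m + 1 : ℕ) - 1 = m := rfl
    rw [hsimp, pow_succ c m]
    rw [div_mul_eq_mul_div, le_div_iff₀ hc0]
    ring_nf
    exact le_refl _

lemma summable_deriv_terms (z : ℂ) (hz : ‖z‖ < 1) (L : List ℕ) (hL : ∀ k ∈ L, 1 ≤ k) (x : ℝ)
    (h0 : 0 ≤ x) (h1 : x ≤ 1) :
    Summable fun n : ℕ => (aa L n : ℂ) * n * z ^ n * (x : ℂ) ^ (n - 1) := by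
  obtain ⟨hc1, hcz⟩ := cz_lt_one hz
  apply Summable.of_norm
  refine Summable.of_nonneg_of_le (fun n => norm_nonneg _) (fun n => ?_)
    (summable_deriv_bound hz)
  rw [norm_mul, norm_mul, norm_mul, norm_pow, norm_pow, Complex.norm_real,
    Complex.norm_natCast, Complex.norm_real, Real.norm_eq_abs,
    abs_of_nonneg (aa_nonneg L n)]
  have hx1 : ‖x‖ ≤ 1 := by rw [Real.norm_eq_abs, abs_of_nonneg h0]; exact h1
  calc aa L n * ↑n * ‖z‖ ^ n * ‖x‖ ^ (n - 1)
      ≤ 1 * ↑n * ‖z‖ ^ n * (2 / (1 + ‖z‖)) ^ (n - 1) := by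
        gcongr
        · exact aa_le_one L hL n
        · exact le_trans hx1 (le_of_lt hc1)
    _ = ↑n * ‖z‖ ^ n * (2 / (1 + ‖z‖)) ^ (n - 1) := by rw [one_mul]


lemma hasDerivAt_gg (z : ℂ) (hz : ‖z‖ < 1) (L : List ℕ) (hL : ∀ k ∈ L, 1 ≤ k) (x : ℝ)
    (hx : x ∈ Set.Icc (0:ℝ) 1) :
    HasDerivAt (gg z L) (∑' n, (aa L n : ℂ) * n * z ^ n * (x : ℂ) ^ (n - 1)) x := by
  obtain ⟨hc1, hcz⟩ := cz_lt_one hz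
  set c := 2 / (1 + ‖z‖) with hc
  have hc0 : (0:ℝ) < c := lt_trans one_pos hc1
  have hmem : ∀ y : ℝ, y ∈ Set.Icc (0:ℝ) 1 → y ∈ Set.Ioo (-c) c := fun y hy =>
    Set.mem_Ioo.mpr ⟨by linarith [hy.1], by linarith [hy.2]⟩
  have key : HasDerivAt (fun y : ℝ => ∑' n, (aa L n : ℂ) * ((y : ℂ) * z) ^ n)
      (∑' n, (aa L n : ℂ) * n * z ^ n * (x : ℂ) ^ (n - 1)) x := by
    refine hasDerivAt_tsum_of_isPreconnected
      (u := fun n : ℕ => (n : ℝ) * ‖z‖ ^ n * c ^ (n - 1))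
      (summable_deriv_bound hz) (isOpen_Ioo (a := -c) (b := c)) isPreconnected_Ioo
      (fun n y _ => hasDerivAt_term (aa L n) z n y) (fun n y hy => ?_)
      (hmem 0 (by norm_num)) ?_ (hmem x hx)
    · rw [norm_mul, norm_mul, norm_mul, norm_pow, norm_pow, Complex.norm_real,
        Complex.norm_natCast, Complex.norm_real, Real.norm_eq_abs,
        abs_of_nonneg (aa_nonneg L n)]
      have hy1 : ‖y‖ ≤ c := by
        rw [Real.norm_eq_abs, abs_le]
        exact ⟨le_of_lt hy.1, le_of_lt hy.2⟩
      calc aa L n * ↑n * ‖z‖ ^ n * ‖y‖ ^ (n - 1)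
          ≤ 1 * ↑n * ‖z‖ ^ n * c ^ (n - 1) := by
            gcongr
            exact aa_le_one L hL n
          _ = ↑n * ‖z‖ ^ n * c ^ (n - 1) := by rw [one_mul]
    · apply summable_of_ne_finset_zero (s := ({0} : Finset ℕ))
      intro n hn
      simp only [Finset.mem_singleton] at hn
      simp [zero_pow hn]
  exact key

lemma continuousOn_gg (z : ℂ) (hz : ‖z‖ < 1) (L : List ℕ) (hL : ∀ k ∈ L, 1 ≤ k) :
    ContinuousOn (gg z L) (Set.Icc (0:ℝ) 1) := fun x hx =>
  (hasDerivAt_gg z hz L hL x hx).continuousAt.continuousWithinAt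

lemma gg_nil (z : ℂ) (t : ℝ) : gg z [] t = 1 := by
  unfold gg
  rw [tsum_eq_single 0 ?_]
  · simp [aa]
  · intro n hn
    unfold aa
    rw [if_neg hn]
    simp

lemma gg_cons_zero (z : ℂ) (k : ℕ) (L : List ℕ) : gg z (k :: L) 0 = 0 := by
  unfold gg
  rw [tsum_eq_single 0 ?_]
  · simp [aa_cons_zero]
  · intro n hn
    rw [show (((0:ℝ):ℂ) * z) ^ n = 0 by rw [Complex.ofReal_zero, zero_mul, zero_pow hn], mul_zero]

/-- derivative identity in the `1/s` case -/
lemma deriv_id_D1 (z : ℂ) (k : ℕ) (L : List ℕ) (x : ℝ) (hx : x ≠ 0) :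
    ∑' n, (aa ((k+2) :: L) n : ℂ) * n * z ^ n * (x : ℂ) ^ (n - 1)
      = (1 / (x : ℂ)) * gg z ((k+1) :: L) x := by
  unfold gg
  rw [← tsum_mul_left]
  apply tsum_congr
  intro n
  have hxC : ((x:ℝ):ℂ) ≠ 0 := by exact_mod_cast hx
  match n with
  | 0 => simp [aa_cons_zero]
  | (m+1) =>
    have hrec := aa_succ_exp (k+1) L (m+1)
    have hrecC : ((m+1 : ℕ) : ℂ) * (aa ((k+2) :: L) (m+1) : ℂ) = (aa ((k+1) :: L) (m+1) : ℂ) := by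
      exact_mod_cast congrArg (fun r : ℝ => (r : ℂ)) hrec
    have hm : (m+1 : ℕ) - 1 = m := rfl
    rw [hm]
    rw [mul_pow]
    rw [show ((x:ℂ))^(m+1) = (x:ℂ)^m * (x:ℂ) from pow_succ _ _]
    field_simp
    rw [← hrecC]
    push_cast
    ring

/-- derivative identity in the `z/(1-sz)` case -/
lemma deriv_id_D2 (z : ℂ) (hz : ‖z‖ < 1) (L : List ℕ) (hL : ∀ k ∈ L, 1 ≤ k) (x : ℝ)
    (h0 : 0 ≤ x) (h1 : x ≤ 1) :
    ∑' n, (aa (1 :: L) n : ℂ) * n * z ^ n * (x : ℂ) ^ (n - 1)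
      = (z / (1 - (x : ℂ) * z)) * gg z L x := by
  have hL1 : ∀ k ∈ (1 :: L), 1 ≤ k := by
    intro k hk
    rcases List.mem_cons.mp hk with h | h
    · omega
    · exact hL k h
  have hxz : ‖(x:ℂ) * z‖ < 1 := by
    rw [norm_mul, Complex.norm_real, Real.norm_eq_abs, abs_of_nonneg h0]
    calc x * ‖z‖ ≤ 1 * ‖z‖ := by gcongr
      _ = ‖z‖ := one_mul _
      _ < 1 := hz
  have hS := summable_deriv_terms z hz (1 :: L) hL1 x h0 h1
  rw [hS.tsum_eq_zero_add]
  rw [show (aa (1 :: L) 0 : ℂ) * (0:ℕ) * z ^ 0 * (x:ℂ) ^ (0-1) = 0 by push_cast; ring,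
    zero_add]
  have hterm : ∀ m : ℕ, (aa (1 :: L) (m+1) : ℂ) * ((m+1 : ℕ) : ℂ) * z ^ (m+1) * (x:ℂ) ^ (m+1-1)
      = z * (((∑ j ∈ Finset.range (m+1), aa L j : ℝ)) : ℂ) * ((x:ℂ) * z) ^ m := by
    intro m
    have hrec := aa_one_exp L (m+1)
    have hrecC : ((m+1 : ℕ) : ℂ) * (aa (1 :: L) (m+1) : ℂ)
        = ((∑ j ∈ Finset.range (m+1), aa L j : ℝ) : ℂ) := by
      exact_mod_cast congrArg (fun r : ℝ => (r : ℂ)) hrec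
    have hm : (m+1 : ℕ) - 1 = m := rfl
    rw [hm, mul_pow, show z ^ (m+1) = z^m * z from pow_succ _ _, ← hrecC]
    ring
  calc ∑' m, (aa (1 :: L) (m+1) : ℂ) * ((m+1:ℕ) : ℂ) * z ^ (m+1) * (x:ℂ) ^ (m+1-1)
      = ∑' m, z * (((∑ j ∈ Finset.range (m+1), aa L j : ℝ)) : ℂ) * ((x:ℂ) * z) ^ m := by
        apply tsum_congr; intro m; rw [hterm m]
    _ = z * ∑' m, (((∑ j ∈ Finset.range (m+1), aa L j : ℝ)) : ℂ) * ((x:ℂ) * z) ^ m := by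
        simp_rw [mul_assoc]
        rw [tsum_mul_left]
    _ = (z / (1 - (x : ℂ) * z)) * gg z L x := by
        rw [div_eq_mul_inv, mul_assoc, mul_comm (1 - (x:ℂ)*z)⁻¹ (gg z L x)]
        congr 1
        unfold gg
        rw [← tsum_geometric_of_norm_lt_one hxz,
          tsum_mul_tsum_eq_tsum_sum_range_of_summable_norm
            (summable_norm_term L hL hxz)
            (by simpa using summable_geometric_of_lt_one (norm_nonneg ((x:ℂ)*z)) hxz)]
        apply tsum_congr
        intro m
        have : ∀ j ∈ Finset.range (m+1),
            (aa L j : ℂ) * ((x:ℂ)*z) ^ j * ((x:ℂ)*z) ^ (m - j)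
              = (aa L j : ℂ) * ((x:ℂ)*z) ^ m := by
          intro j hj
          rw [Finset.mem_range] at hj
          rw [mul_assoc, ← pow_add]
          congr 2
          omega
        rw [Finset.sum_congr rfl this, ← Finset.sum_mul]
        push_cast
        ring


lemma II_cons (f : ℝ → ℂ) (fs : List (ℝ → ℂ)) (t : ℝ) :
    II (f :: fs) t = ∫ s in (0:ℝ)..t, f s * II fs s := rfl

lemma wordL_one (z : ℂ) (L : List ℕ) :
    wordL z (1 :: L) = (fun s : ℝ => z / (1 - (s:ℂ) * z)) :: wordL z L := by
  simp [wordL]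

lemma wordL_two (z : ℂ) (k : ℕ) (L : List ℕ) :
    wordL z ((k+2) :: L) = (fun s : ℝ => 1 / (s:ℂ)) :: wordL z ((k+1) :: L) := by
  show List.replicate (k+2-1) _ ++ _ = _
  rw [show k+2-1 = (k+1-1) + 1 from rfl, List.replicate_succ, List.cons_append]
  rfl

lemma continuousOn_f2 (z : ℂ) (hz : ‖z‖ < 1) :
    ContinuousOn (fun s : ℝ => z / (1 - (s:ℂ) * z)) (Set.Icc (0:ℝ) 1) := by
  apply ContinuousOn.div continuousOn_const
  · exact (continuous_const.sub (Complex.continuous_ofReal.mul continuous_const)).continuousOn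
  · intro s hs
    apply one_sub_ne
    rw [norm_mul, Complex.norm_real, Real.norm_eq_abs, abs_of_nonneg hs.1]
    nlinarith [hs.2, norm_nonneg z, hz]

lemma intervalIntegrable_one_div_gg (z : ℂ) (hz : ‖z‖ < 1) (k : ℕ) (L : List ℕ)
    (hL : ∀ j ∈ ((k+1) :: L), 1 ≤ j) (t : ℝ) (ht : t ∈ Set.Icc (0:ℝ) 1) :
    IntervalIntegrable (fun s : ℝ => (1 / (s:ℂ)) * gg z ((k+1) :: L) s) volume 0 t := by
  have hLtail : ∀ j ∈ L, 1 ≤ j := fun j hj => hL j (List.mem_cons_of_mem _ hj)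
  set C := ∑' n, aa ((k+1) :: L) n * ‖z‖ ^ n with hC
  have hCsum : Summable fun n => aa ((k+1) :: L) n * ‖z‖ ^ n :=
    summable_aa_geom _ hL (norm_nonneg z) hz
  rw [intervalIntegrable_iff_integrableOn_Ioc_of_le ht.1]
  have hmeas : AEStronglyMeasurable (fun s : ℝ => (1 / (s:ℂ)) * gg z ((k+1) :: L) s)
      (volume.restrict (Set.Ioc 0 t)) := by
    apply ContinuousOn.aestronglyMeasurable _ measurableSet_Ioc
    apply ContinuousOn.mul
    · apply ContinuousOn.div continuousOn_const Complex.continuous_ofReal.continuousOn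
      intro s hs
      exact_mod_cast ne_of_gt hs.1
    · exact (continuousOn_gg z hz _ hL).mono
        (fun s hs => ⟨le_of_lt hs.1, le_trans hs.2 ht.2⟩)
  refine MeasureTheory.Integrable.mono' (g := fun _ => C) ?_ hmeas ?_
  · exact MeasureTheory.integrableOn_const measure_Ioc_lt_top.ne
  · rw [MeasureTheory.ae_restrict_iff' measurableSet_Ioc]
    apply Filter.Eventually.of_forall
    intro s hs
    have hs0 : 0 < s := hs.1
    have hs1 : s ≤ 1 := le_trans hs.2 ht.2
    have hsz : ‖(s:ℂ) * z‖ < 1 := by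
      rw [norm_mul, Complex.norm_real, Real.norm_eq_abs, abs_of_nonneg (le_of_lt hs0)]
      nlinarith [norm_nonneg z, hz]
    have hsummable := summable_norm_term ((k+1)::L) hL hsz
    have hgb : ‖gg z ((k+1) :: L) s‖ ≤ s * C := by
      calc ‖gg z ((k+1) :: L) s‖ ≤ ∑' n, ‖(aa ((k+1)::L) n : ℂ) * ((s:ℂ)*z)^n‖ :=
            norm_tsum_le_tsum_norm hsummable
        _ ≤ ∑' n, s * (aa ((k+1)::L) n * ‖z‖^n) := by
            refine Summable.tsum_le_tsum (fun n => ?_) hsummable (hCsum.mul_left s)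
            rw [norm_term, norm_mul, Complex.norm_real, Real.norm_eq_abs,
              abs_of_nonneg (le_of_lt hs0)]
            match n with
            | 0 => simp [aa_cons_zero]
            | (m+1) =>
              rw [mul_pow]
              have hsp : s ^ (m+1) ≤ s := by
                calc s ^ (m+1) = s ^ m * s := pow_succ _ _
                  _ ≤ 1 * s := by
                      gcongr
                      exact pow_le_one₀ (le_of_lt hs0) hs1
                  _ = s := one_mul _
              calc aa ((k+1)::L) (m+1) * (s ^ (m+1) * ‖z‖ ^ (m+1))
                  ≤ aa ((k+1)::L) (m+1) * (s * ‖z‖ ^ (m+1)) := by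
                    gcongr
                    exact aa_nonneg _ _
                _ = s * (aa ((k+1)::L) (m+1) * ‖z‖ ^ (m+1)) := by ring
        _ = s * C := tsum_mul_left
    have h1s : ‖(1 / (s:ℂ))‖ = 1 / s := by
      rw [norm_div, norm_one, Complex.norm_real, Real.norm_eq_abs, abs_of_nonneg (le_of_lt hs0)]
    calc ‖(1 / (s:ℂ)) * gg z ((k+1) :: L) s‖
        = (1/s) * ‖gg z ((k+1) :: L) s‖ := by rw [norm_mul, h1s]
      _ ≤ (1/s) * (s * C) := by
          gcongr
      _ = C := by field_simp

lemma lemB (z : ℂ) (hz : ‖z‖ < 1) :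
    ∀ (N : ℕ) (L : List ℕ), L.sum ≤ N → (∀ k ∈ L, 1 ≤ k) →
      ∀ t : ℝ, t ∈ Set.Icc (0:ℝ) 1 → II (wordL z L) t = gg z L t := by
  intro N
  induction N with
  | zero =>
    intro L hsum hL t ht
    match L with
    | [] => rw [wordL]; exact (gg_nil z t).symm
    | (k :: L') =>
      exfalso
      have h1 := hL k (List.mem_cons_self)
      have h2 : (k :: L').sum = k + L'.sum := List.sum_cons
      omega
  | succ N ih =>
    intro L hsum hL t ht
    match L with
    | [] => rw [wordL]; exact (gg_nil z t).symm
    | (0 :: L') =>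
      exfalso
      have h1 := hL 0 (List.mem_cons_self)
      omega
    | (1 :: L') =>
      have hL' : ∀ k ∈ L', 1 ≤ k := fun k hk => hL k (List.mem_cons_of_mem _ hk)
      have hsum' : L'.sum ≤ N := by
        have h2 : (1 :: L').sum = 1 + L'.sum := List.sum_cons
        omega
      rw [wordL_one, II_cons]
      have hEq : Set.EqOn (fun s : ℝ => (z / (1 - (s:ℂ)*z)) * II (wordL z L') s)
          (fun s : ℝ => (z / (1 - (s:ℂ)*z)) * gg z L' s) (Set.uIcc 0 t) := by
        rw [Set.uIcc_of_le ht.1]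
        intro s hs
        simp only
        rw [ih L' hsum' hL' s ⟨hs.1, le_trans hs.2 ht.2⟩]
      rw [intervalIntegral.integral_congr hEq]
      have key : ∫ s in (0:ℝ)..t, (z / (1 - (s:ℂ)*z)) * gg z L' s
          = gg z (1 :: L') t - gg z (1 :: L') 0 := by
        apply intervalIntegral.integral_eq_sub_of_hasDerivAt_of_le ht.1
        · exact (continuousOn_gg z hz _ hL).mono (Set.Icc_subset_Icc le_rfl ht.2)
        · intro x hx
          have hx1 : x ∈ Set.Icc (0:ℝ) 1 := ⟨le_of_lt hx.1, le_trans (le_of_lt hx.2) ht.2⟩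
          have hd := hasDerivAt_gg z hz (1 :: L') hL x hx1
          rwa [deriv_id_D2 z hz L' hL' x hx1.1 hx1.2] at hd
        · apply ContinuousOn.intervalIntegrable
          rw [Set.uIcc_of_le ht.1]
          exact ((continuousOn_f2 z hz).mono (Set.Icc_subset_Icc le_rfl ht.2)).mul
            ((continuousOn_gg z hz L' hL').mono (Set.Icc_subset_Icc le_rfl ht.2))
      rw [key, gg_cons_zero, sub_zero]
    | ((k+2) :: L') =>
      have hL1 : ∀ j ∈ ((k+1) :: L'), 1 ≤ j := by
        intro j hj
        rcases List.mem_cons.mp hj with h | h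
        · omega
        · exact hL j (List.mem_cons_of_mem _ h)
      have hsum' : ((k+1) :: L').sum ≤ N := by
        have h2 : ((k+2) :: L').sum = (k+2) + L'.sum := List.sum_cons
        have h3 : ((k+1) :: L').sum = (k+1) + L'.sum := List.sum_cons
        omega
      rw [wordL_two, II_cons]
      have hEq : Set.EqOn (fun s : ℝ => (1 / (s:ℂ)) * II (wordL z ((k+1) :: L')) s)
          (fun s : ℝ => (1 / (s:ℂ)) * gg z ((k+1) :: L') s) (Set.uIcc 0 t) := by
        rw [Set.uIcc_of_le ht.1]
        intro s hs
        simp only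
        rw [ih ((k+1) :: L') hsum' hL1 s ⟨hs.1, le_trans hs.2 ht.2⟩]
      rw [intervalIntegral.integral_congr hEq]
      have key : ∫ s in (0:ℝ)..t, (1 / (s:ℂ)) * gg z ((k+1) :: L') s
          = gg z ((k+2) :: L') t - gg z ((k+2) :: L') 0 := by
        apply intervalIntegral.integral_eq_sub_of_hasDerivAt_of_le ht.1
        · exact (continuousOn_gg z hz _ hL).mono (Set.Icc_subset_Icc le_rfl ht.2)
        · intro x hx
          have hx1 : x ∈ Set.Icc (0:ℝ) 1 := ⟨le_of_lt hx.1, le_trans (le_of_lt hx.2) ht.2⟩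
          have hd := hasDerivAt_gg z hz ((k+2) :: L') hL x hx1
          rwa [deriv_id_D1 z k L' x (ne_of_gt hx.1)] at hd
        · exact intervalIntegrable_one_div_gg z hz k L' hL1 t ht
      rw [key, gg_cons_zero, sub_zero]

/-- for `|z| < 1` and `k₁,…,k_r ≥ 1`, the iterated integral
`∫₀^z ζ₁^{∘(k₁−1)}∘ζ₁₁∘⋯∘ζ₁^{∘(k_r−1)}∘ζ₁₁` equals the multiple polylogarithm
`∑_{n₁>⋯>n_r>0} z^{n₁}/(n₁^{k₁}⋯n_r^{k_r})`. -/
theorem iteratedIntegral_eq_MPL (z : ℂ) (hz : ‖z‖ < 1) (r : ℕ) (hr : 0 < r)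
    (ks : Fin r → ℕ) (hks : ∀ t, 1 ≤ ks t) :
    II (mplWord z ks) 1 =
      ∑' n : {n : Fin r → ℕ // StrictAnti n ∧ ∀ t, 0 < n t},
        z ^ (n.1 ⟨0, hr⟩) / ∏ t : Fin r, ((n.1 t : ℂ)) ^ (ks t) := by
  obtain ⟨r', rfl⟩ := Nat.exists_eq_succ_of_ne_zero (Nat.pos_iff_ne_zero.mp hr)
  have hLks : ∀ k ∈ List.ofFn ks, 1 ≤ k := fun k hk => by
    obtain ⟨i, rfl⟩ := (List.mem_ofFn (f := ks) (a := k)).mp hk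
    exact hks i
  rw [mplWord_eq_wordL, lemB z hz (List.ofFn ks).sum (List.ofFn ks) le_rfl hLks 1
    ⟨zero_le_one, le_rfl⟩]
  show gg z (List.ofFn ks) 1
      = ∑' n : {n : Fin (r'+1) → ℕ // StrictAnti n ∧ ∀ t, 0 < n t},
          z ^ (n.1 0) / ∏ t : Fin (r'+1), ((n.1 t : ℂ)) ^ (ks t)
  rw [tsum_mpl z hz r' ks hks]
  unfold gg
  simp only [Complex.ofReal_one, one_mul]

end MPLIterInt
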